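/- Let Y be a connected graph on n vertices and π a permutation of its vertices. For distinct powers g ≠ g′ of the cyclic shift σ = (n, n−1, ..., 2, 1) acting on positions, the permutations g·π and g′·π are not ∼_Y equivalent. -/

import Mathlib

namespace AcycPaper

variable {V : Type*}

/-- `r` is an orientation of the graph `Y`: exactly one direction per edge. -/
def IsOrientation (Y : SimpleGraph V) (r : V → V → Prop) : Prop :=
  (∀ i j, Y.Adj i j ↔ (r i j ∨ r j i)) ∧ ∀ i j, r i j → ¬ r j i

/-- A relation is acyclic if it has no directed cycles. -/
def IsAcyclicRel (r : V → V → Prop) : Prop := ∀ v, ¬ Relation.TransGen r v v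

/-- The set of acyclic orientations of `Y`. -/
def Acyc (Y : SimpleGraph V) : Set (V → V → Prop) :=
  {r | IsOrientation Y r ∧ IsAcyclicRel r}

/-- `v` is a source: no edge points into `v`. -/
def IsSource (r : V → V → Prop) (v : V) : Prop := ∀ j, ¬ r j v

open Classical in
/-- Click (source-to-sink move) at `v`: reverse all edges incident to `v`. -/
def click (r : V → V → Prop) (v : V) : V → V → Prop :=
  fun i j => if v = i ∨ v = j then r j i else r i j

/-- One click step between acyclic orientations. -/
def ClickStep (Y : SimpleGraph V) (r r' : V → V → Prop) : Prop :=
  r ∈ Acyc Y ∧ ∃ v, IsSource r v ∧ r' = click r v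

/-- κ-equivalence: the equivalence relation generated by clicks. -/
def KEquiv (Y : SimpleGraph V) : (V → V → Prop) → (V → V → Prop) → Prop :=
  Relation.EqvGen (ClickStep Y)

/-- The set of κ-equivalence classes of acyclic orientations. -/
def KQuot (Y : SimpleGraph V) := Quot (fun a b : Acyc Y => ClickStep Y a.1 b.1)

/-- κ(Y): number of κ-equivalence classes. -/
noncomputable def kappa (Y : SimpleGraph V) : ℕ := Nat.card (KQuot Y)

/-- α(Y): number of acyclic orientations. -/
noncomputable def alpha (Y : SimpleGraph V) : ℕ := Nat.card (Acyc Y)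

/-- Adjacency in the update graph U(Y): the two permutations differ by swapping
two consecutive positions holding vertices non-adjacent in `Y`. -/
def UpdateAdj {n : ℕ} (Y : SimpleGraph (Fin n)) (π π' : Equiv.Perm (Fin n)) : Prop :=
  ∃ (k : ℕ) (hk : k + 1 < n),
    ¬ Y.Adj (π ⟨k, Nat.lt_of_succ_lt hk⟩) (π ⟨k + 1, hk⟩) ∧
    π' = π * Equiv.swap ⟨k, Nat.lt_of_succ_lt hk⟩ ⟨k + 1, hk⟩


lemma finRotate_pow_val {m : ℕ} (s : ℕ) (x : Fin (m + 1)) :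
    (((finRotate (m + 1)) ^ s) x).val = (x.val + s) % (m + 1) := by
  induction s with
  | zero => simp [Nat.mod_eq_of_lt x.isLt]
  | succ s ih =>
      rw [pow_succ', Equiv.Perm.mul_apply, finRotate_succ_apply, Fin.add_def, ih]
      show ((↑x + s) % (m + 1) + 1 % (m + 1)) % (m + 1) = (↑x + (s + 1)) % (m + 1)
      rw [← Nat.add_mod, Nat.add_assoc]

lemma mod_cases' {m x y : ℕ} (hx : x < m) (hy : y < m + m) (h : y % m = x) :
    y = x ∨ y = x + m := by
  rcases Nat.lt_or_ge y m with h1 | h1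
  · rw [Nat.mod_eq_of_lt h1] at h; omega
  · right
    rw [Nat.mod_eq_sub_mod h1, Nat.mod_eq_of_lt (by omega)] at h
    omega

/-- The relative order of adjacent vertices is invariant under `UpdateAdj`. -/
lemma invariant {n : ℕ} (Y : SimpleGraph (Fin n)) {a b : Equiv.Perm (Fin n)}
    (h : Relation.EqvGen (UpdateAdj Y) a b) :
    ∀ u v, Y.Adj u v → (a⁻¹ u < a⁻¹ v ↔ b⁻¹ u < b⁻¹ v) := by
  induction h with
  | refl => exact fun u v _ => Iff.rfl
  | symm _ _ _ ih => exact fun u v huv => (ih u v huv).symm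
  | trans _ _ _ _ _ ih1 ih2 => exact fun u v huv => (ih1 u v huv).trans (ih2 u v huv)
  | rel a b hab =>
      intro u v huv
      obtain ⟨k, hk, hna, rfl⟩ := hab
      have hinv : (a * Equiv.swap (⟨k, Nat.lt_of_succ_lt hk⟩ : Fin n) ⟨k + 1, hk⟩)⁻¹
          = Equiv.swap (⟨k, Nat.lt_of_succ_lt hk⟩ : Fin n) ⟨k + 1, hk⟩ * a⁻¹ := by
        rw [mul_inv_rev, Equiv.swap_inv]
      rw [hinv]
      simp only [Equiv.Perm.mul_apply]
      have hxy : a⁻¹ u ≠ a⁻¹ v := fun h => huv.ne (by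
        have := congrArg a h; simpa using this)
      have h1 : ¬(a⁻¹ u = (⟨k, Nat.lt_of_succ_lt hk⟩ : Fin n) ∧ a⁻¹ v = ⟨k + 1, hk⟩) := by
        rintro ⟨e1, e2⟩
        apply hna
        rw [← e1, ← e2]
        simpa using huv
      have h2 : ¬(a⁻¹ u = (⟨k + 1, hk⟩ : Fin n) ∧ a⁻¹ v = ⟨k, Nat.lt_of_succ_lt hk⟩) := by
        rintro ⟨e1, e2⟩
        apply hna
        rw [← e2, ← e1]
        simpa using huv.symm
      rw [Equiv.swap_apply_def, Equiv.swap_apply_def]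
      split_ifs <;>
        (simp only [ne_eq, Fin.lt_def, Fin.ext_iff, Fin.val_mk, not_and] at * <;> omega)

theorem distinct_shifts_not_equivalent' {n : ℕ} (Y : SimpleGraph (Fin n))
    (hY : Y.Connected) (π : Equiv.Perm (Fin n)) (s s' : ℕ)
    (hs : s < n) (hs' : s' < n) (hlt : s < s') :
    ¬ Relation.EqvGen (UpdateAdj Y) (π * (finRotate n) ^ s) (π * (finRotate n) ^ s') := by
  intro h
  obtain ⟨m, rfl⟩ : ∃ m, n = m + 1 := ⟨n - 1, by omega⟩
  set A : Set (Fin (m + 1)) := {u | s ≤ (π⁻¹ u).val ∧ (π⁻¹ u).val < s'} with hA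
  have hu0 : π ⟨s, hs⟩ ∈ A := by
    simp only [hA, Set.mem_setOf_eq, Equiv.Perm.inv_def, Equiv.symm_apply_apply]; omega
  have hv0 : π ⟨s', hs'⟩ ∉ A := by
    simp only [hA, Set.mem_setOf_eq, Equiv.Perm.inv_def, Equiv.symm_apply_apply]; omega
  obtain ⟨w⟩ := hY.preconnected _ _
  obtain ⟨d, _, hdS, hdnS⟩ := w.exists_boundary_dart A hu0 hv0
  have hadj : Y.Adj d.fst d.snd := d.adj
  have key := invariant Y h d.fst d.snd hadj
  have hpos : ∀ (t : ℕ) (z : Fin (m + 1)),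
      (((π * (finRotate (m + 1)) ^ t)⁻¹ z).val + t) % (m + 1) = (π⁻¹ z).val := by
    intro t z
    rw [mul_inv_rev, Equiv.Perm.mul_apply, ← finRotate_pow_val t]
    exact congrArg Fin.val (Equiv.apply_symm_apply _ _)
  have hAu : s ≤ (π⁻¹ d.fst).val ∧ (π⁻¹ d.fst).val < s' := hdS
  have hAv : ¬(s ≤ (π⁻¹ d.snd).val ∧ (π⁻¹ d.snd).val < s') := hdnS
  have hne2 : (π⁻¹ d.fst).val ≠ (π⁻¹ d.snd).val := by
    intro h'
    exact hadj.ne (by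
      have := congrArg π (Fin.val_injective h' : π⁻¹ d.fst = π⁻¹ d.snd)
      simpa using this)
  set pu := ((π * (finRotate (m + 1)) ^ s)⁻¹ d.fst) with hpu
  set pv := ((π * (finRotate (m + 1)) ^ s)⁻¹ d.snd) with hpv
  set qu := ((π * (finRotate (m + 1)) ^ s')⁻¹ d.fst) with hqu
  set qv := ((π * (finRotate (m + 1)) ^ s')⁻¹ d.snd) with hqv
  have e1 := mod_cases' ((π⁻¹ d.fst).isLt) (by have := pu.isLt; omega) (hpos s d.fst)
  have e2 := mod_cases' ((π⁻¹ d.snd).isLt) (by have := pv.isLt; omega) (hpos s d.snd)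
  have e3 := mod_cases' ((π⁻¹ d.fst).isLt) (by have := qu.isLt; omega) (hpos s' d.fst)
  have e4 := mod_cases' ((π⁻¹ d.snd).isLt) (by have := qv.isLt; omega) (hpos s' d.snd)
  rw [Fin.lt_def, Fin.lt_def] at key
  have h1 := pu.isLt
  have h2 := pv.isLt
  have h3 := qu.isLt
  have h4 := qv.isLt
  omega

/-- for a connected graph Y on n vertices and distinct powers
σ^s ≠ σ^{s'} (0 ≤ s, s' < n) of the cyclic shift acting on positions, the
shifted permutations σ^s·π and σ^{s'}·π are not ∼_Y equivalent. -/
theorem distinct_shifts_not_equivalent {n : ℕ} (Y : SimpleGraph (Fin n))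
    (hY : Y.Connected) (π : Equiv.Perm (Fin n)) (s s' : ℕ)
    (hs : s < n) (hs' : s' < n) (hne : s ≠ s') :
    ¬ Relation.EqvGen (UpdateAdj Y) (π * (finRotate n) ^ s) (π * (finRotate n) ^ s') := by
  rcases Nat.lt_or_ge s s' with hlt | hge
  · exact distinct_shifts_not_equivalent' Y hY π s s' hs hs' hlt
  · have hlt : s' < s := by omega
    intro h
    exact distinct_shifts_not_equivalent' Y hY π s' s hs' hs hlt h.symm

end AcycPaper
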